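/- If X is a random variable with E X = 0, Var(X) = 1, density p, and D(X) < 1, then P(|X| ≥ 2√(log(1/D(X)))) ≤ 2 D(X)/log(1/D(X)). -/

import Mathlib

open Real MeasureTheory Set

noncomputable def stdGaussianDensity (t : ℝ) : ℝ :=
  (Real.sqrt (2 * Real.pi))⁻¹ * Real.exp (-t ^ 2 / 2)

/-- Entropic distance (relative entropy) of a density `p` to the standard normal. -/
noncomputable def entDist (p : ℝ → ℝ) : ℝ :=
  ∫ x, p x * Real.log (p x / stdGaussianDensity x)

open Filter Topology

lemma aux_sub_le_mul_log {t q : ℝ} (ht : 0 ≤ t) (hq : 0 < q) :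
    t - q ≤ t * Real.log (t / q) := by
  rcases ht.eq_or_lt with h | h
  · rw [← h]; simpa using hq.le
  · have h1 : Real.log (q / t) ≤ q / t - 1 := Real.log_le_sub_one_of_pos (by positivity)
    have h2 : Real.log (q / t) = - Real.log (t / q) := by
      rw [← Real.log_inv]; congr 1; field_simp
    rw [h2] at h1
    have h3 : t * (q / t - 1) = q - t := by field_simp
    nlinarith [mul_le_mul_of_nonneg_left h1 h.le, h3]

lemma stdGaussian_pos (x : ℝ) : 0 < stdGaussianDensity x := by
  unfold stdGaussianDensity; positivity

lemma stdGaussian_integrable : Integrable stdGaussianDensity := by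
  have : stdGaussianDensity = fun x => (Real.sqrt (2 * Real.pi))⁻¹ * Real.exp (-(1/2) * x ^ 2) := by
    funext x; unfold stdGaussianDensity; ring_nf
  rw [this]
  exact (integrable_exp_neg_mul_sq (by norm_num)).const_mul _

lemma stdGaussian_integral : ∫ x : ℝ, stdGaussianDensity x = 1 := by
  have h : ∫ x : ℝ, Real.exp (-(1/2) * x ^ 2) = Real.sqrt (π / (1/2)) := integral_gaussian (1/2)
  have he : stdGaussianDensity = fun x => (Real.sqrt (2 * Real.pi))⁻¹ * Real.exp (-(1/2) * x ^ 2) := by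
    funext x; unfold stdGaussianDensity; ring_nf
  rw [he, integral_const_mul, h]
  have : π / (1/2) = 2 * π := by ring
  rw [this, inv_mul_cancel₀]
  exact Real.sqrt_ne_zero'.2 (by positivity)

lemma tail_primitive {T : ℝ} :
    ∫ x in Set.Ioi T, x * Real.exp (-(1/4) * x ^ 2) = 2 * Real.exp (-(1/4) * T ^ 2) := by
  have hint : IntegrableOn (fun x => x * Real.exp (-(1/4) * x ^ 2)) (Set.Ioi T) :=
    (integrable_mul_exp_neg_mul_sq (by norm_num)).integrableOn
  have hderiv : ∀ x ∈ Set.Ici T, HasDerivAt (fun y : ℝ => -2 * Real.exp (-(1/4) * y ^ 2))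
      (x * Real.exp (-(1/4) * x ^ 2)) x := by
    intro x _
    have h1 : HasDerivAt (fun y : ℝ => -(1/4) * y ^ 2) (-(1/4) * (2 * x ^ 1)) x :=
      (hasDerivAt_pow 2 x).const_mul (-(1/4))
    have h2 := (h1.exp).const_mul (-2 : ℝ)
    exact h2.congr_deriv (by ring)
  have htend : Tendsto (fun y : ℝ => -2 * Real.exp (-(1/4) * y ^ 2)) atTop (𝓝 0) := by
    have h1 : Tendsto (fun y : ℝ => -(1/4) * y ^ 2) atTop atBot := by
      apply Tendsto.const_mul_atTop_of_neg (by norm_num)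
      exact tendsto_pow_atTop (by norm_num)
    have h2 := Real.tendsto_exp_atBot.comp h1
    have := h2.const_mul (-2 : ℝ)
    simpa using this
  rw [integral_Ioi_of_hasDerivAt_of_tendsto' hderiv hint htend]
  ring

lemma tail_bound {T : ℝ} (hT : 0 < T) :
    ∫ x in Set.Ioi T, Real.exp (-(1/4) * x ^ 2) ≤ 2 / T * Real.exp (-(1/4) * T ^ 2) := by
  have hint : IntegrableOn (fun x => x * Real.exp (-(1/4) * x ^ 2)) (Set.Ioi T) :=
    (integrable_mul_exp_neg_mul_sq (by norm_num)).integrableOn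
  have h1 : ∫ x in Set.Ioi T, Real.exp (-(1/4) * x ^ 2)
      ≤ ∫ x in Set.Ioi T, (x * Real.exp (-(1/4) * x ^ 2)) / T := by
    apply setIntegral_mono_on
    · exact (integrable_exp_neg_mul_sq (by norm_num)).integrableOn
    · exact hint.div_const T
    · exact measurableSet_Ioi
    · intro x hx
      rw [le_div_iff₀ hT]
      have : 0 ≤ Real.exp (-(1/4) * x ^ 2) := (Real.exp_pos _).le
      nlinarith [le_of_lt (mem_Ioi.1 hx)]
  rw [integral_div, tail_primitive] at h1
  calc ∫ x in Set.Ioi T, Real.exp (-(1/4) * x ^ 2) ≤ 2 * Real.exp (-(1/4) * T ^ 2) / T := h1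
    _ = 2 / T * Real.exp (-(1/4) * T ^ 2) := by ring

lemma tail_set_eq {T : ℝ} : {x : ℝ | T ≤ |x|} = Set.Iic (-T) ∪ Set.Ici T := by
  ext x
  simp only [Set.mem_setOf_eq, Set.mem_union, Set.mem_Iic, Set.mem_Ici, le_abs]
  constructor
  · rintro (h | h)
    · right; exact h
    · left; linarith
  · rintro (h | h)
    · right; linarith
    · left; exact h

lemma tail_set_bound {T : ℝ} (hT : 0 < T) :
    ∫ x in {x : ℝ | T ≤ |x|}, Real.exp (-(1/4) * x ^ 2)
      ≤ 4 / T * Real.exp (-(1/4) * T ^ 2) := by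
  rw [tail_set_eq]
  have hi : Integrable (fun x : ℝ => Real.exp (-(1/4) * x ^ 2)) :=
    integrable_exp_neg_mul_sq (by norm_num)
  rw [setIntegral_union (Iic_disjoint_Ici.2 (by linarith)) measurableSet_Ici
    hi.integrableOn hi.integrableOn]
  have hrefl : ∫ x in Set.Iic (-T), Real.exp (-(1/4) * x ^ 2)
      = ∫ x in Set.Ioi T, Real.exp (-(1/4) * x ^ 2) := by
    have := integral_comp_neg_Iic (-T) (fun x : ℝ => Real.exp (-(1/4) * x ^ 2))
    simp only [neg_neg] at this
    rw [← this]
    congr 1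
    funext x
    ring_nf
  rw [hrefl, integral_Ici_eq_integral_Ioi]
  have := tail_bound hT
  calc (∫ x in Set.Ioi T, Real.exp (-(1/4) * x ^ 2)) + ∫ x in Set.Ioi T, Real.exp (-(1/4) * x ^ 2)
      ≤ 2 / T * Real.exp (-(1/4) * T ^ 2) + 2 / T * Real.exp (-(1/4) * T ^ 2) := by linarith
    _ = 4 / T * Real.exp (-(1/4) * T ^ 2) := by ring

set_option maxHeartbeats 2000000 in
theorem stmt_12 (p : ℝ → ℝ) (hmeas : Measurable p) (hp0 : ∀ x, 0 ≤ p x)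
    (hp1 : ∫ x, p x = 1)
    (hmean : ∫ x, x * p x = 0) (hmom : Integrable (fun x => x ^ 2 * p x))
    (hvar : ∫ x, x ^ 2 * p x = 1)
    (hD : Integrable (fun x => p x * Real.log (p x / stdGaussianDensity x)))
    (hDpos : 0 < entDist p) (hD1 : entDist p < 1) :
    ∫ x in {x : ℝ | 2 * Real.sqrt (Real.log (1 / entDist p)) ≤ |x|}, p x
      ≤ 2 * entDist p / Real.log (1 / entDist p) := by
  have hpint : Integrable p := by
    by_contra h
    rw [integral_undef h] at hp1; norm_num at hp1
  have hDval : entDist p = ∫ x, p x * Real.log (p x / stdGaussianDensity x) := rfl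
  set D := entDist p with hDdef
  set L := Real.log (1 / D) with hLdef
  have hLpos : 0 < L := Real.log_pos (by rw [lt_div_iff₀ hDpos]; linarith)
  set T := 2 * Real.sqrt L with hTdef
  have hsq : Real.sqrt L ^ 2 = L := Real.sq_sqrt hLpos.le
  have hTpos : 0 < T := by rw [hTdef]; positivity
  have hT2 : T ^ 2 = 4 * L := by rw [hTdef, mul_pow, hsq]; ring
  have heLD : Real.exp (-L) = D := by
    rw [hLdef, Real.log_div one_ne_zero (ne_of_gt hDpos), Real.log_one]
    simpa using Real.exp_log hDpos
  clear_value D L T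
  by_cases hcase : L ≤ 2 * D
  · have h1 : ∫ x in {x : ℝ | T ≤ |x|}, p x ≤ 1 := by
      rw [← hp1]
      exact setIntegral_le_integral hpint (Filter.Eventually.of_forall hp0)
    have h2 : 1 ≤ 2 * D / L := (one_le_div hLpos).2 (by linarith)
    linarith
  · push_neg at hcase
    have hexp23 : Real.exp (2/3) < 2 := by
      have hl : (2:ℝ)/3 < Real.log 2 := lt_trans (by norm_num) Real.log_two_gt_d9
      have := Real.exp_lt_exp.2 hl
      rwa [Real.exp_log (by norm_num : (0:ℝ) < 2)] at this
    have hL23 : 2/3 < L := by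
      by_contra h
      push_neg at h
      have h2 : (1:ℝ)/2 < Real.exp (-L) := by
        have ha : Real.exp (-(2/3) : ℝ) ≤ Real.exp (-L) := Real.exp_le_exp.2 (by linarith)
        have hb : (1:ℝ)/2 < Real.exp (-(2/3 : ℝ)) := by
          rw [Real.exp_neg, lt_inv_comm₀ (by norm_num) (Real.exp_pos _)]
          simpa using hexp23
        linarith
      rw [heLD] at h2
      linarith
    -- setup
    set S := {x : ℝ | T ≤ |x|} with hSdef
    have hSm : MeasurableSet S := measurableSet_le measurable_const continuous_abs.measurable
    set c := (Real.sqrt (2 * π))⁻¹ with hcdef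
    have hcpos : 0 < c := by rw [hcdef]; positivity
    set G : ℝ → ℝ := fun x => if T ≤ |x| then c * Real.exp (-(1/4) * x ^ 2)
      else stdGaussianDensity x with hGdef
    have hi4 : Integrable (fun x : ℝ => c * Real.exp (-(1/4) * x ^ 2)) :=
      (integrable_exp_neg_mul_sq (by norm_num)).const_mul c
    have hGeq : G = fun x => S.indicator (fun y => c * Real.exp (-(1/4) * y ^ 2)) x
        + Sᶜ.indicator stdGaussianDensity x := by
      funext x
      by_cases h : T ≤ |x|
      · have hx : x ∈ S := h
        simp [hGdef, h, Set.indicator_of_mem hx, Set.indicator_of_notMem (by simp [hSdef, h] : x ∉ Sᶜ)]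
      · have hx : x ∉ S := h
        simp [hGdef, h, Set.indicator_of_notMem hx, Set.indicator_of_mem (by simp [hSdef, h] : x ∈ Sᶜ)]
    have hiG : Integrable G := by
      rw [hGeq]
      exact (hi4.indicator hSm).add (stdGaussian_integrable.indicator hSm.compl)
    have hi1 : Integrable (fun y : ℝ => y ^ 2 / 4 * p y) := by
      have he : (fun y : ℝ => y ^ 2 / 4 * p y) = fun y => (y ^ 2 * p y) / 4 := by
        funext y; ring
      rw [he]; exact hmom.div_const 4
    -- pointwise Gibbs inequality
    have hpt : ∀ x, S.indicator (fun y => y ^ 2 / 4 * p y) x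
        ≤ p x * Real.log (p x / stdGaussianDensity x) - p x + G x := by
      intro x
      have hq4 : 0 < c * Real.exp (-(1/4) * x ^ 2) := by positivity
      by_cases hx : T ≤ |x|
      · have hxS : x ∈ S := hx
        rw [Set.indicator_of_mem hxS]
        have key := aux_sub_le_mul_log (hp0 x) hq4
        have heq : p x * Real.log (p x / (c * Real.exp (-(1/4) * x ^ 2)))
            = p x * Real.log (p x / stdGaussianDensity x) - x ^ 2 / 4 * p x := by
          rcases (hp0 x).eq_or_lt with h0 | h0
          · rw [← h0]; ring
          · rw [Real.log_div (ne_of_gt h0) (ne_of_gt hq4),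
              Real.log_div (ne_of_gt h0) (ne_of_gt (stdGaussian_pos x)),
              Real.log_mul (ne_of_gt hcpos) (Real.exp_ne_zero _), Real.log_exp]
            unfold stdGaussianDensity
            rw [Real.log_mul (by positivity) (Real.exp_ne_zero _), Real.log_exp]
            rw [hcdef]
            ring
        have hGx : G x = c * Real.exp (-(1/4) * x ^ 2) := by simp [hGdef, hx]
        rw [hGx]
        linarith
      · have hxS : x ∉ S := hx
        rw [Set.indicator_of_notMem hxS]
        have key := aux_sub_le_mul_log (hp0 x) (stdGaussian_pos x)
        have hGx : G x = stdGaussianDensity x := by simp [hGdef, hx]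
        rw [hGx]
        linarith
    -- integrate the pointwise inequality
    have hiRHS : Integrable (fun x => p x * Real.log (p x / stdGaussianDensity x) - p x + G x) :=
      (hD.sub hpint).add hiG
    have hmono := integral_mono (hi1.indicator hSm) hiRHS hpt
    rw [integral_indicator hSm] at hmono
    have e1 : ∫ a, (p a * Real.log (p a / stdGaussianDensity a) - p a + G a)
        = (∫ a, (p a * Real.log (p a / stdGaussianDensity a) - p a)) + ∫ a, G a :=
      integral_add (hD.sub hpint) hiG
    have e2 : ∫ a, (p a * Real.log (p a / stdGaussianDensity a) - p a)
        = (∫ a, p a * Real.log (p a / stdGaussianDensity a)) - ∫ a, p a :=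
      integral_sub hD hpint
    rw [e1, e2, hp1, ← hDval] at hmono
    -- bound ∫ G
    have hGle : ∀ x, G x ≤ stdGaussianDensity x
        + S.indicator (fun y => c * Real.exp (-(1/4) * y ^ 2)) x := by
      intro x
      by_cases h : T ≤ |x|
      · have hxS : x ∈ S := h
        rw [Set.indicator_of_mem hxS]
        have := (stdGaussian_pos x).le
        simp only [hGdef, if_pos h]
        linarith
      · have hxS : x ∉ S := h
        rw [Set.indicator_of_notMem hxS]
        simp [hGdef, h]
    have hGint : ∫ x, G x ≤ 1 + c * (4 / T * Real.exp (-(1/4) * T ^ 2)) := by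
      have h1 : ∫ x, G x ≤ ∫ x, (stdGaussianDensity x
          + S.indicator (fun y => c * Real.exp (-(1/4) * y ^ 2)) x) :=
        integral_mono hiG (stdGaussian_integrable.add (hi4.indicator hSm)) hGle
      have e3 : ∫ x, (stdGaussianDensity x + S.indicator (fun y => c * Real.exp (-(1/4) * y ^ 2)) x)
          = (∫ x, stdGaussianDensity x) + ∫ x, S.indicator (fun y => c * Real.exp (-(1/4) * y ^ 2)) x :=
        integral_add stdGaussian_integrable (hi4.indicator hSm)
      rw [e3, stdGaussian_integral, integral_indicator hSm] at h1
      have h2 : ∫ x in S, c * Real.exp (-(1/4) * x ^ 2)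
          = c * ∫ x in S, Real.exp (-(1/4) * x ^ 2) := integral_const_mul c _
      have h3 := mul_le_mul_of_nonneg_left (tail_set_bound hTpos) hcpos.le
      rw [hSdef] at h2
      calc ∫ x, G x ≤ 1 + ∫ x in S, c * Real.exp (-(1/4) * x ^ 2) := h1
        _ = 1 + c * ∫ x in {x : ℝ | T ≤ |x|}, Real.exp (-(1/4) * x ^ 2) := by rw [← h2, hSdef]
        _ ≤ 1 + c * (4 / T * Real.exp (-(1/4) * T ^ 2)) := by linarith
    -- exp(-T²/4) = D
    have hexpT : Real.exp (-(1/4) * T ^ 2) = D := by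
      rw [hT2, show -(1/4) * (4 * L) = -L by ring, heLD]
    -- c * (4/T) ≤ 1
    have hcT : c * (4 / T) ≤ 1 := by
      have hpi3 : (3:ℝ) < π := Real.pi_gt_three
      have h4 : (4:ℝ) < 2 * π * L := by nlinarith
      have h5 : (2:ℝ) < Real.sqrt (2 * π * L) := by
        have := Real.sqrt_lt_sqrt (by norm_num : (0:ℝ) ≤ 4) h4
        rwa [show Real.sqrt 4 = 2 by
          rw [show (4:ℝ) = 2 ^ 2 by norm_num, Real.sqrt_sq (by norm_num)]] at this
      have hsm : Real.sqrt (2 * π) * Real.sqrt L = Real.sqrt (2 * π * L) :=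
        (Real.sqrt_mul (by positivity) L).symm
      have h6 : Real.sqrt (2 * π) * T = 2 * Real.sqrt (2 * π * L) := by
        rw [hTdef, ← hsm]; ring
      have h7 : (4:ℝ) < Real.sqrt (2 * π) * T := by rw [h6]; linarith
      have h8 : 0 < Real.sqrt (2 * π) := by positivity
      rw [hcdef, inv_mul_le_iff₀ h8, mul_one, div_le_iff₀ hTpos]
      linarith
    -- combine: tail second moment bound
    have hA : ∫ x in S, x ^ 2 / 4 * p x ≤ 2 * D := by
      have : c * (4 / T * Real.exp (-(1/4) * T ^ 2)) ≤ D := by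
        rw [hexpT, ← mul_assoc]
        calc c * (4 / T) * D ≤ 1 * D := mul_le_mul_of_nonneg_right hcT hDpos.le
          _ = D := one_mul D
      linarith
    -- Chebyshev
    have hiT : Integrable (fun x : ℝ => x ^ 2 / T ^ 2 * p x) := by
      have he : (fun x : ℝ => x ^ 2 / T ^ 2 * p x) = fun x => (x ^ 2 * p x) / T ^ 2 := by
        funext x; ring
      rw [he]; exact hmom.div_const _
    have hcheb : ∫ x in S, p x ≤ ∫ x in S, x ^ 2 / T ^ 2 * p x := by
      apply setIntegral_mono_on hpint.integrableOn hiT.integrableOn hSm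
      intro x hx
      have hxT : T ≤ |x| := hx
      have hx2 : T ^ 2 ≤ x ^ 2 := by
        rw [← sq_abs x]
        nlinarith
      have h1 : 1 ≤ x ^ 2 / T ^ 2 := (one_le_div (by positivity)).2 hx2
      nlinarith [hp0 x]
    have heqc : ∫ x in S, x ^ 2 / T ^ 2 * p x = (4 / T ^ 2) * ∫ x in S, x ^ 2 / 4 * p x := by
      have h2 : ∫ x in S, x ^ 2 / T ^ 2 * p x = ∫ x in S, (4 / T ^ 2) * (x ^ 2 / 4 * p x) := by
        congr 1
        funext x
        ring
      rw [h2]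
      exact integral_const_mul _ _
    have hfin : ∫ x in S, p x ≤ 2 * D / L := by
      have h9 : (0:ℝ) ≤ 4 / T ^ 2 := by positivity
      have h10 : (4 / T ^ 2) * ∫ x in S, x ^ 2 / 4 * p x ≤ (4 / T ^ 2) * (2 * D) :=
        mul_le_mul_of_nonneg_left hA h9
      have hL0 : L ≠ 0 := ne_of_gt hLpos
      have h11 : (4 / T ^ 2) * (2 * D) = 2 * D / L := by
        rw [hT2]; field_simp
      linarith [hcheb, heqc ▸ h10]
    exact hfin
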